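/- Let G be a group of orientation-preserving homeomorphisms of ℝ (under composition) acting without fixed points, i.e., no element of G other than the identity fixes any point of ℝ. Then G is commutative. -/

import Mathlib

open Filter Topology

theorem holder_aux {α : Type*} [Group α] [LinearOrder α]
    (hl : ∀ k a b : α, a ≤ b → k * a ≤ k * b)
    (hr : ∀ k a b : α, a ≤ b → a * k ≤ b * k)
    (harch : ∀ g : α, 1 < g → ∀ h : α, ∃ n : ℕ, h ≤ g ^ n)
    (a b : α) (hlt : b * a < a * b) : False := by
  classical
  have hl' : ∀ (k x y : α), x < y → k * x < k * y := fun k x y hxy =>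
    lt_of_le_of_ne (hl k x y hxy.le) fun e => hxy.ne (mul_left_cancel e)
  have hr' : ∀ (k x y : α), x < y → x * k < y * k := fun k x y hxy =>
    lt_of_le_of_ne (hr k x y hxy.le) fun e => hxy.ne (mul_right_cancel e)
  have hmul : ∀ {x y z w : α}, x ≤ y → z ≤ w → x * z ≤ y * w := fun hxy hzw =>
    le_trans (hr _ _ _ hxy) (hl _ _ _ hzw)
  set c : α := (a * b) * (b * a)⁻¹ with hc_def
  have hc : 1 < c := by
    have h2 := hr' (b * a)⁻¹ _ _ hlt
    rwa [mul_inv_cancel] at h2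
  have hz : StrictMono fun m : ℤ => c ^ m := by
    apply strictMono_int_of_lt_succ
    intro n
    calc c ^ n = c ^ n * 1 := (mul_one _).symm
    _ < c ^ n * c := hl' _ _ _ hc
    _ = c ^ (n + 1) := (zpow_add_one c n).symm
  have hinv : ∀ {u v : α}, u⁻¹ ≤ v → v⁻¹ ≤ u := by
    intro u v h
    have h2 := hl v⁻¹ _ _ (hr u _ _ h)
    simpa [mul_assoc] using h2
  have exm : ∀ u : α, ∃ m : ℤ, (c ^ m ≤ u ∧ ∀ z : ℤ, c ^ z ≤ u → z ≤ m) := by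
    intro u
    have hbd : ∀ z : ℤ, c ^ z ≤ u → z ≤ (harch c hc u).choose := by
      intro z hzle
      have h1 : c ^ z ≤ c ^ ((harch c hc u).choose : ℤ) := by
        rw [zpow_natCast]; exact le_trans hzle (harch c hc u).choose_spec
      exact hz.le_iff_le.1 h1
    have hne : ∃ z : ℤ, c ^ z ≤ u := by
      obtain ⟨n, hn⟩ := harch c hc u⁻¹
      refine ⟨-n, ?_⟩
      rw [zpow_neg, zpow_natCast]
      exact hinv hn
    obtain ⟨m, hm1, hm2⟩ := Int.exists_greatest_of_bdd ⟨_, hbd⟩ hne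
    exact ⟨m, hm1, hm2⟩
  choose m hm1 hm2 using exm
  have hm3 : ∀ u : α, u < c ^ (m u + 1) := by
    intro u
    by_contra hcon
    push_neg at hcon
    have := hm2 u _ hcon
    omega
  have hmono : ∀ u v : α, u ≤ v → m u ≤ m v := fun u v huv => hm2 v _ (le_trans (hm1 u) huv)
  have hadd_le : ∀ u v : α, m u + m v ≤ m (u * v) := by
    intro u v
    apply hm2
    rw [zpow_add]
    exact hmul (hm1 u) (hm1 v)
  have hadd_ge : ∀ u v : α, m (u * v) ≤ m u + m v + 1 := by
    intro u v
    have h1 : u * v < c ^ (m u + 1) * c ^ (m v + 1) :=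
      lt_of_lt_of_le (hr' v _ _ (hm3 u)) (hl _ _ _ (hm3 v).le)
    rw [← zpow_add] at h1
    have h2 := hz.lt_iff_lt.1 (lt_of_le_of_lt (hm1 (u * v)) h1)
    omega
  have hmc : ∀ k : ℤ, m (c ^ k) = k := fun k =>
    le_antisymm (hz.le_iff_le.1 (hm1 _)) (hm2 _ k le_rfl)
  -- upper bound on m (u ^ n)
  have hpow_ub : ∀ (u : α) (n : ℕ), m (u ^ n) ≤ n * (m u + 1) := by
    intro u n
    induction n with
    | zero => simp [show m 1 = 0 by simpa using hmc 0]
    | succ n ih =>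
      have := hadd_ge (u ^ n) u
      rw [← pow_succ] at this
      push_cast
      push_cast at ih
      nlinarith [this]
  -- Fekete
  have key : ∀ u : α, ∃ L : ℝ, Tendsto (fun n : ℕ => (m (u ^ n) : ℝ) / n) atTop (𝓝 L) := by
    intro u
    have hsub : Subadditive fun n : ℕ => -(m (u ^ n) : ℝ) := by
      intro j k
      have h1 : m (u ^ j) + m (u ^ k) ≤ m (u ^ (j + k)) := by
        rw [pow_add]; exact hadd_le _ _
      push_cast
      have : ((m (u ^ j) : ℝ)) + (m (u ^ k) : ℝ) ≤ (m (u ^ (j + k)) : ℝ) := by exact_mod_cast h1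
      linarith
    have hbdd : BddBelow (Set.range fun n : ℕ => (-(m (u ^ n) : ℝ)) / n) := by
      refine ⟨min 0 (-((m u : ℝ) + 1)), ?_⟩
      rintro x ⟨n, rfl⟩
      rcases Nat.eq_zero_or_pos n with rfl | hn
      · simp
      · have h1 : (m (u ^ n) : ℝ) ≤ n * ((m u : ℝ) + 1) := by exact_mod_cast hpow_ub u n
        have hn' : (0 : ℝ) < n := by exact_mod_cast hn
        have : -((m u : ℝ) + 1) ≤ (-(m (u ^ n) : ℝ)) / n := by
          rw [le_div_iff₀ hn']
          nlinarith
        exact le_trans (min_le_right _ _) this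
    refine ⟨-hsub.lim, ?_⟩
    have := hsub.tendsto_lim hbdd
    have h2 := this.neg
    refine h2.congr fun n => by ring
  choose τ hτ using key
  have τc : τ c = 1 := by
    have h1 : (fun n : ℕ => (m (c ^ n) : ℝ) / n) =ᶠ[atTop] fun _ => (1 : ℝ) := by
      filter_upwards [eventually_gt_atTop 0] with n hn
      have : m (c ^ n) = n := by
        have := hmc (n : ℤ)
        rwa [zpow_natCast] at this
      rw [this]
      field_simp
      norm_cast
    have h2 : Tendsto (fun n : ℕ => (m (c ^ n) : ℝ) / n) atTop (𝓝 1) :=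
      Tendsto.congr' h1.symm tendsto_const_nhds
    exact tendsto_nhds_unique (hτ c) h2
  -- homomorphism property
  have hhom : ∀ u v : α, v * u ≤ u * v → τ (u * v) = τ u + τ v ∧ τ (v * u) = τ u + τ v := by
    intro u v huv
    have step1 : ∀ n : ℕ, v ^ n * u ≤ u * v ^ n := by
      intro n
      induction n with
      | zero => simp
      | succ n ih =>
        calc v ^ (n + 1) * u = v * (v ^ n * u) := by rw [pow_succ']; rw [mul_assoc]
        _ ≤ v * (u * v ^ n) := hl _ _ _ ih
        _ = (v * u) * v ^ n := by rw [mul_assoc]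
        _ ≤ (u * v) * v ^ n := hr _ _ _ huv
        _ = u * v ^ (n + 1) := by rw [mul_assoc, ← pow_succ']
    have step1b : ∀ n : ℕ, v * u ^ n ≤ u ^ n * v := by
      intro n
      induction n with
      | zero => simp
      | succ n ih =>
        calc v * u ^ (n + 1) = (v * u ^ n) * u := by rw [pow_succ, ← mul_assoc]
        _ ≤ (u ^ n * v) * u := hr _ _ _ ih
        _ = u ^ n * (v * u) := by rw [mul_assoc]
        _ ≤ u ^ n * (u * v) := hl _ _ _ huv
        _ = u ^ (n + 1) * v := by rw [← mul_assoc, ← pow_succ]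
    have step2 : ∀ n : ℕ, (u * v) ^ n ≤ u ^ n * v ^ n := by
      intro n
      induction n with
      | zero => simp
      | succ n ih =>
        calc (u * v) ^ (n + 1) = (u * v) ^ n * (u * v) := pow_succ _ _
        _ ≤ (u ^ n * v ^ n) * (u * v) := hr _ _ _ ih
        _ = u ^ n * ((v ^ n * u) * v) := by simp [mul_assoc]
        _ ≤ u ^ n * ((u * v ^ n) * v) := hl _ _ _ (hr _ _ _ (step1 n))
        _ = u ^ (n + 1) * v ^ (n + 1) := by simp [pow_succ, pow_succ', mul_assoc]
    have step3 : ∀ n : ℕ, v ^ n * u ^ n ≤ (v * u) ^ n := by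
      intro n
      induction n with
      | zero => simp
      | succ n ih =>
        calc v ^ (n + 1) * u ^ (n + 1) = v ^ n * ((v * u ^ n) * u) := by
              simp [pow_succ, pow_succ', mul_assoc]
        _ ≤ v ^ n * ((u ^ n * v) * u) := hl _ _ _ (hr _ _ _ (step1b n))
        _ = (v ^ n * u ^ n) * (v * u) := by simp [mul_assoc]
        _ ≤ (v * u) ^ n * (v * u) := hr _ _ _ ih
        _ = (v * u) ^ (n + 1) := (pow_succ _ _).symm
    have step4 : ∀ n : ℕ, (v * u) ^ n ≤ (u * v) ^ n := by
      intro n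
      induction n with
      | zero => simp
      | succ n ih =>
        rw [pow_succ, pow_succ]
        exact hmul ih huv
    -- limits
    have hA : Tendsto (fun n : ℕ => (m (u ^ n) : ℝ) / n + (m (v ^ n) : ℝ) / n) atTop
        (𝓝 (τ u + τ v)) := (hτ u).add (hτ v)
    have hA1 : Tendsto (fun n : ℕ => (m (u ^ n) : ℝ) / n + (m (v ^ n) : ℝ) / n + 1 / n) atTop
        (𝓝 (τ u + τ v)) := by
      have := hA.add tendsto_one_div_atTop_nhds_zero_nat
      simpa using this
    have hub : ∀ᶠ n : ℕ in atTop,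
        (m ((u * v) ^ n) : ℝ) / n ≤ (m (u ^ n) : ℝ) / n + (m (v ^ n) : ℝ) / n + 1 / n := by
      filter_upwards [eventually_gt_atTop 0] with n hn
      have hn' : (0 : ℝ) < n := by exact_mod_cast hn
      have h1 : m ((u * v) ^ n) ≤ m (u ^ n) + m (v ^ n) + 1 :=
        le_trans (hmono _ _ (step2 n)) (hadd_ge _ _)
      have h1' : (m ((u * v) ^ n) : ℝ) ≤ (m (u ^ n) : ℝ) + (m (v ^ n) : ℝ) + 1 := by
        exact_mod_cast h1
      rw [← add_div, ← add_div, div_le_div_iff₀ hn' hn']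
      nlinarith
    have hlb : ∀ᶠ n : ℕ in atTop,
        (m (u ^ n) : ℝ) / n + (m (v ^ n) : ℝ) / n ≤ (m ((v * u) ^ n) : ℝ) / n := by
      filter_upwards [eventually_gt_atTop 0] with n hn
      have hn' : (0 : ℝ) < n := by exact_mod_cast hn
      have h1 : m (u ^ n) + m (v ^ n) ≤ m ((v * u) ^ n) := by
        have := le_trans (hadd_le (v ^ n) (u ^ n)) (hmono _ _ (step3 n))
        omega
      have h1' : (m (u ^ n) : ℝ) + (m (v ^ n) : ℝ) ≤ (m ((v * u) ^ n) : ℝ) := by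
        exact_mod_cast h1
      rw [← add_div, div_le_div_iff₀ hn' hn']
      nlinarith
    have hmid : ∀ᶠ n : ℕ in atTop,
        (m ((v * u) ^ n) : ℝ) / n ≤ (m ((u * v) ^ n) : ℝ) / n := by
      filter_upwards [eventually_gt_atTop 0] with n hn
      have hn' : (0 : ℝ) < n := by exact_mod_cast hn
      have h1 : m ((v * u) ^ n) ≤ m ((u * v) ^ n) := hmono _ _ (step4 n)
      have h1' : (m ((v * u) ^ n) : ℝ) ≤ (m ((u * v) ^ n) : ℝ) := by exact_mod_cast h1
      exact (div_le_div_iff_of_pos_right hn').mpr h1'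
    have i1 : τ (u * v) ≤ τ u + τ v := le_of_tendsto_of_tendsto (hτ (u * v)) hA1 hub
    have i2 : τ u + τ v ≤ τ (v * u) := le_of_tendsto_of_tendsto hA (hτ (v * u)) hlb
    have i3 : τ (v * u) ≤ τ (u * v) := le_of_tendsto_of_tendsto (hτ (v * u)) (hτ (u * v)) hmid
    constructor <;> linarith
  have hom2 : ∀ u v : α, τ (u * v) = τ u + τ v := by
    intro u v
    rcases le_total (v * u) (u * v) with h | h
    · exact (hhom u v h).1
    · rw [(hhom v u h).2]; ring
  have e1 : c * (b * a) = a * b := by rw [hc_def, inv_mul_cancel_right]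
  have e2 : τ (a * b) = τ c + τ (b * a) := by rw [← e1, hom2]
  have h1 := (hhom a b hlt.le).1
  have h2 := (hhom a b hlt.le).2
  rw [τc] at e2
  linarith

/-- A group of orientation-preserving homeomorphisms of `ℝ`
acting without fixed points is commutative. -/
theorem fixed_point_free_group_commutative
    (G : Subgroup (Equiv.Perm ℝ))
    (hmono : ∀ g ∈ G, StrictMono ⇑g) (hcont : ∀ g ∈ G, Continuous ⇑g)
    (hfree : ∀ g ∈ G, g ≠ 1 → ∀ x : ℝ, g x ≠ x) :
    ∀ a ∈ G, ∀ b ∈ G, a * b = b * a := by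
  classical
  -- no nontrivial element has a fixed point; key comparison lemma
  have cmp : ∀ g ∈ G, ∀ h ∈ G, (g : Equiv.Perm ℝ) 0 ≤ h 0 → ∀ x : ℝ, g x ≤ h x := by
    intro g hg h hh h0 x
    by_cases hk : h * g⁻¹ = 1
    · have : h = g := by
        have := congrArg (· * g) hk
        simpa [mul_assoc] using this
      rw [this]
    · have hkG : h * g⁻¹ ∈ G := G.mul_mem hh (G.inv_mem hg)
      have hkfree := hfree _ hkG hk
      have happ : (h * g⁻¹) (g 0) = h 0 := by simp [Equiv.Perm.mul_apply]
      have hk0 : g 0 < (h * g⁻¹) (g 0) := by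
        rw [happ]
        exact lt_of_le_of_ne h0 fun e => hkfree (g 0) (by rw [happ, ← e])
      have hpos : ∀ y : ℝ, y < (h * g⁻¹) y := by
        intro y
        by_contra hcon
        push_neg at hcon
        have hylt : (h * g⁻¹) y < y := lt_of_le_of_ne hcon (hkfree y)
        -- IVT on φ t = (h * g⁻¹) t - t
        have hφ : Continuous fun t : ℝ => (h * g⁻¹) t - t :=
          (hcont _ hkG).sub continuous_id
        have h1 : (0 : ℝ) ∈ Set.uIcc ((h * g⁻¹) y - y) ((h * g⁻¹) (g 0) - g 0) := by
          rw [Set.mem_uIcc]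
          left
          constructor <;> [linarith; linarith]
        obtain ⟨t, _, ht⟩ := intermediate_value_uIcc (f := fun t : ℝ => (h * g⁻¹) t - t)
          (hφ.continuousOn) h1
        exact hkfree t (by linarith [ht] ; )
      have : g x < (h * g⁻¹) (g x) := hpos (g x)
      have he : (h * g⁻¹) (g x) = h x := by simp [Equiv.Perm.mul_apply]
      rw [he] at this
      exact this.le
  have inj0 : ∀ g ∈ G, ∀ h ∈ G, (g : Equiv.Perm ℝ) 0 = h 0 → g = h := by
    intro g hg h hh he
    by_contra hne
    have hk : h * g⁻¹ ≠ 1 := by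
      intro e
      apply hne
      have := congrArg (· * g) e
      simpa [mul_assoc] using this.symm
    have : (h * g⁻¹) (g 0) = g 0 := by simp [Equiv.Perm.mul_apply, ← he]
    exact hfree _ (G.mul_mem hh (G.inv_mem hg)) hk (g 0) this
  -- order on the subgroup
  let f : ↥G → ℝ := fun g => (g : Equiv.Perm ℝ) 0
  have hf : Function.Injective f := by
    intro g h he
    exact Subtype.ext (inj0 _ g.2 _ h.2 he)
  letI : LinearOrder ↥G := LinearOrder.lift' f hf
  have hle : ∀ x y : ↥G, x ≤ y ↔ f x ≤ f y := fun _ _ => Iff.rfl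
  have hltiff : ∀ x y : ↥G, x < y ↔ f x < f y := by
    intro x y
    rw [lt_iff_le_not_ge, lt_iff_le_not_ge, hle, hle]
  have hl : ∀ k x y : ↥G, x ≤ y → k * x ≤ k * y := by
    intro k x y hxy
    rw [hle] at hxy ⊢
    have : f (k * x) = (k : Equiv.Perm ℝ) (f x) := by
      simp [f, Equiv.Perm.mul_apply]
    rw [this, show f (k * y) = (k : Equiv.Perm ℝ) (f y) by simp [f, Equiv.Perm.mul_apply]]
    exact (hmono _ k.2).monotone hxy
  have hr : ∀ k x y : ↥G, x ≤ y → x * k ≤ y * k := by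
    intro k x y hxy
    rw [hle] at hxy ⊢
    have hx : f (x * k) = (x : Equiv.Perm ℝ) (f k) := by simp [f, Equiv.Perm.mul_apply]
    have hy : f (y * k) = (y : Equiv.Perm ℝ) (f k) := by simp [f, Equiv.Perm.mul_apply]
    rw [hx, hy]
    exact cmp _ x.2 _ y.2 hxy _
  have harch : ∀ g : ↥G, 1 < g → ∀ h : ↥G, ∃ n : ℕ, h ≤ g ^ n := by
    intro g hg1 h
    have hgne : (g : Equiv.Perm ℝ) ≠ 1 := by
      intro e
      have : (1 : ↥G) = g := Subtype.ext e.symm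
      exact absurd this (ne_of_lt hg1)
    have hgpos : ∀ x : ℝ, x < (g : Equiv.Perm ℝ) x := by
      -- from 1 < g : 0 < g 0, and cmp applied to 1 and g
      have h0 : (0 : ℝ) < (g : Equiv.Perm ℝ) 0 := by
        have := (hltiff 1 g).mp hg1
        simpa [f] using this
      intro x
      have hle1 : ∀ y : ℝ, y ≤ (g : Equiv.Perm ℝ) y := by
        intro y
        have := cmp 1 G.one_mem _ g.2 (by simpa using h0.le) y
        simpa using this
      exact lt_of_le_of_ne (hle1 x) (fun e => hfree _ g.2 hgne x e.symm)
    -- the orbit of 0 under g is unbounded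
    by_contra hcon
    push_neg at hcon
    set s : ℕ → ℝ := fun n => f (g ^ n) with hs
    have hsucc : ∀ n : ℕ, s (n + 1) = (g : Equiv.Perm ℝ) (s n) := by
      intro n
      show f (g ^ (n + 1)) = _
      rw [pow_succ']
      show ((g * g ^ n : ↥G) : Equiv.Perm ℝ) 0 = (g : Equiv.Perm ℝ) (f (g ^ n))
      rw [Subgroup.coe_mul, Equiv.Perm.mul_apply]
    have hsmono : StrictMono s := by
      apply strictMono_nat_of_lt_succ
      intro n
      rw [hsucc n]
      exact hgpos (s n)
    have hbdd : ∀ n, s n < f h := fun n => (hltiff _ _).mp (hcon n)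
    have hbdd' : BddAbove (Set.range s) := ⟨f h, by rintro x ⟨n, rfl⟩; exact (hbdd n).le⟩
    have htend : Tendsto s atTop (𝓝 (⨆ n, s n)) :=
      tendsto_atTop_ciSup hsmono.monotone hbdd'
    have htend2 : Tendsto (fun n => s (n + 1)) atTop (𝓝 (⨆ n, s n)) :=
      htend.comp (tendsto_add_atTop_nat 1)
    have htend3 : Tendsto (fun n => (g : Equiv.Perm ℝ) (s n)) atTop
        (𝓝 ((g : Equiv.Perm ℝ) (⨆ n, s n))) :=
      ((hcont _ g.2).continuousAt).tendsto.comp htend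
    have : (g : Equiv.Perm ℝ) (⨆ n, s n) = ⨆ n, s n := by
      apply tendsto_nhds_unique _ htend2
      exact htend3.congr fun n => (hsucc n).symm
    exact hfree _ g.2 hgne _ this
  intro a ha b hb
  have key : ∀ x y : ↥G, x * y = y * x := by
    intro x y
    by_contra hne
    rcases lt_or_gt_of_ne hne with h | h
    · exact holder_aux hl hr harch y x h
    · exact holder_aux hl hr harch x y h
  have := key ⟨a, ha⟩ ⟨b, hb⟩
  exact Subtype.ext_iff.mp this
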